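/- Let F be a field of characteristic 0 and s(y) = y + a₂y² + a₃y³ + ⋯ ∈ F[[y]]. Then the formal differential equation y·ψ'(y) = s(ψ(y)) has a solution ψ ∈ F[[y]] of the form ψ(y) = y + c₂y² + ⋯. -/

import Mathlib

open PowerSeries

/-- Formal composition `f(ψ)` of power series, defined coefficientwise (this is the usual
substitution when `ψ` has zero constant term). -/
noncomputable def PowerSeries.compose {F : Type*} [CommRing F]
    (f ψ : PowerSeries F) : PowerSeries F :=
  PowerSeries.mk fun n => PowerSeries.coeff n (Polynomial.aeval ψ (f.trunc (n + 1)))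

section Aux

variable {F : Type*} [CommRing F]

lemma aeval_trunc_eq (s ψ : PowerSeries F) (n : ℕ) :
    Polynomial.aeval ψ (s.trunc n) = ∑ k ∈ Finset.range n, (coeff k s) • ψ ^ k := by
  rw [PowerSeries.trunc_apply, map_sum, Finset.range_eq_Ico]
  refine Finset.sum_congr rfl fun k _ => ?_
  rw [Polynomial.aeval_monomial, PowerSeries.algebraMap_apply, Algebra.algebraMap_self_apply,
    ← PowerSeries.smul_eq_C_mul]

lemma coeff_compose (s ψ : PowerSeries F) (n : ℕ) :
    coeff n (s.compose ψ) =
      ∑ k ∈ Finset.range (n + 1), coeff k s * coeff n (ψ ^ k) := by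
  rw [PowerSeries.compose, coeff_mk, aeval_trunc_eq, map_sum]
  refine Finset.sum_congr rfl fun k _ => ?_
  rw [LinearMap.map_smul, smul_eq_mul]

lemma coeff_pow_congr {ψ φ : PowerSeries F}
    (hψ0 : constantCoeff ψ = 0) (hφ0 : constantCoeff φ = 0) {n : ℕ}
    (hagree : ∀ m < n, coeff m ψ = coeff m φ) :
    ∀ k, 1 ≤ k → ∀ m ≤ n, (m < n ∨ 2 ≤ k) → coeff m (ψ ^ k) = coeff m (φ ^ k) := by
  intro k
  induction k with
  | zero => intro h; omega
  | succ k ih =>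
    intro _ m hmn hcase
    rcases Nat.eq_zero_or_pos k with hk0 | hk1
    · subst hk0
      have hmn' : m < n := by omega
      simpa using hagree m hmn'
    · rw [pow_succ', pow_succ', PowerSeries.coeff_mul, PowerSeries.coeff_mul]
      refine Finset.sum_congr rfl fun p hp => ?_
      rw [Finset.HasAntidiagonal.mem_antidiagonal] at hp
      rcases Nat.eq_zero_or_pos p.1 with h0 | hpos
      · rw [h0]
        simp only [PowerSeries.coeff_zero_eq_constantCoeff, hψ0, hφ0, zero_mul]
      · have hp2 : p.2 < n := by omega
        have h2' : coeff p.2 (ψ ^ k) = coeff p.2 (φ ^ k) :=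
          ih hk1 p.2 (le_of_lt hp2) (Or.inl hp2)
        rcases Nat.lt_or_ge p.1 n with h1' | h1'
        · rw [hagree p.1 h1', h2']
        · have hp20 : p.2 = 0 := by omega
          rw [hp20]
          have c1 : coeff 0 (ψ ^ k) = 0 := by
            rw [PowerSeries.coeff_zero_eq_constantCoeff, map_pow, hψ0, zero_pow (by omega)]
          have c2 : coeff 0 (φ ^ k) = 0 := by
            rw [PowerSeries.coeff_zero_eq_constantCoeff, map_pow, hφ0, zero_pow (by omega)]
          rw [c1, c2, mul_zero, mul_zero]

lemma coeff_compose_diff (s : PowerSeries F) {ψ φ : PowerSeries F}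
    (hψ0 : constantCoeff ψ = 0) (hφ0 : constantCoeff φ = 0) {n : ℕ} (hn : 1 ≤ n)
    (hagree : ∀ m < n, coeff m ψ = coeff m φ) :
    coeff n (s.compose ψ) =
      coeff n (s.compose φ) + coeff 1 s * (coeff n ψ - coeff n φ) := by
  rw [coeff_compose, coeff_compose]
  have key : ∑ k ∈ Finset.range (n + 1), coeff k s * coeff n (ψ ^ k)
      - ∑ k ∈ Finset.range (n + 1), coeff k s * coeff n (φ ^ k)
      = coeff 1 s * (coeff n ψ - coeff n φ) := by
    rw [← Finset.sum_sub_distrib, Finset.sum_eq_single 1]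
    · rw [pow_one, pow_one, mul_sub]
    · intro k hk hk1
      rcases Nat.eq_zero_or_pos k with h0 | hpos
      · subst h0; simp
      · have hk2 : 2 ≤ k := by omega
        rw [coeff_pow_congr hψ0 hφ0 hagree k (by omega) n le_rfl (Or.inr hk2), sub_self]
    · intro h
      exact absurd (Finset.mem_range.mpr (by omega)) h
  linear_combination key

end Aux

/-- The coefficients of the solution, defined by strong recursion. -/
noncomputable def solCoeff {F : Type*} [Field F] (s : PowerSeries F) : ℕ → F
  | 0 => 0
  | 1 => 1
  | (n + 2) =>
      ((n + 1 : F))⁻¹ *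
        PowerSeries.coeff (n + 2)
          (s.compose (PowerSeries.mk fun k =>
            if _ : k < n + 2 then solCoeff s k else 0))
  termination_by n => n
  decreasing_by omega

/-- Let `F` be a field of characteristic `0` and
`s(y) = y + a₂y² + a₃y³ + ⋯ ∈ F[[y]]`.  Then the formal differential equation
`y·ψ'(y) = s(ψ(y))` has a solution `ψ ∈ F[[y]]` of the form `ψ(y) = y + c₂y² + ⋯`. -/
theorem formal_ode_order_one_solvable
    (F : Type*) [Field F] [CharZero F] (s : PowerSeries F)
    (hs0 : PowerSeries.constantCoeff s = 0)
    (hs1 : PowerSeries.coeff 1 s = 1) :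
    ∃ ψ : PowerSeries F,
      PowerSeries.constantCoeff ψ = 0 ∧
      PowerSeries.coeff 1 ψ = 1 ∧
      PowerSeries.X * ψ.derivativeFun = PowerSeries.compose s ψ := by
  have hc0 : solCoeff s 0 = 0 := by rw [solCoeff]
  have hc1 : solCoeff s 1 = 1 := by rw [solCoeff]
  refine ⟨PowerSeries.mk (solCoeff s), ?_, ?_, ?_⟩
  · rw [← coeff_zero_eq_constantCoeff, coeff_mk, hc0]
  · rw [coeff_mk, hc1]
  set ψ : PowerSeries F := PowerSeries.mk (solCoeff s) with hψ
  have hψ0 : constantCoeff ψ = 0 := by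
    rw [hψ, ← coeff_zero_eq_constantCoeff, coeff_mk, hc0]
  ext n
  match n with
  | 0 =>
    have hL : coeff 0 (PowerSeries.X * ψ.derivativeFun) = 0 := by
      rw [coeff_zero_eq_constantCoeff, map_mul, constantCoeff_X, zero_mul]
    rw [hL, coeff_compose]
    rw [Finset.sum_range_one, ← coeff_zero_eq_constantCoeff] at *
    simp [hs0]
  | 1 =>
    have hL : coeff 1 (PowerSeries.X * ψ.derivativeFun) = coeff 0 ψ.derivativeFun :=
      coeff_succ_X_mul 0 _
    rw [hL, (show coeff 0 ψ.derivativeFun = _ from coeff_derivative (R := F) ψ 0), hψ, coeff_mk, hc1, coeff_compose,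
      Finset.sum_range_succ, Finset.sum_range_one, hs1, pow_one, coeff_mk, hc1, pow_zero]
    simp [coeff_zero_eq_constantCoeff, hs0, PowerSeries.coeff_one]
  | (m + 2) =>
    set φ : PowerSeries F :=
      PowerSeries.mk (fun k => if _ : k < m + 2 then solCoeff s k else 0) with hφdef
    have hφ0 : constantCoeff φ = 0 := by
      rw [hφdef, ← coeff_zero_eq_constantCoeff, coeff_mk]
      simp [hc0]
    have hagree : ∀ k < m + 2, coeff k ψ = coeff k φ := by
      intro k hk
      rw [hψ, hφdef, coeff_mk, coeff_mk, dif_pos hk]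
    have hφn : coeff (m + 2) φ = 0 := by
      rw [hφdef, coeff_mk, dif_neg (lt_irrefl (m + 2))]
    have hcn : solCoeff s (m + 2) = ((m : F) + 1)⁻¹ * coeff (m + 2) (s.compose φ) := by
      rw [hφdef, solCoeff]
    have hm1 : ((m : F) + 1) ≠ 0 := Nat.cast_add_one_ne_zero m
    have hcomp : coeff (m + 2) (s.compose φ) = ((m : F) + 1) * solCoeff s (m + 2) := by
      rw [hcn, ← mul_assoc, mul_inv_cancel₀ hm1, one_mul]
    have hdiff := coeff_compose_diff s hψ0 hφ0 (show 1 ≤ m + 2 by omega) hagree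
    rw [hs1, one_mul, hφn, sub_zero, hψ, coeff_mk, hcomp] at hdiff
    have hL : coeff (m + 2) (PowerSeries.X * ψ.derivativeFun)
        = coeff (m + 1) ψ.derivativeFun := coeff_succ_X_mul (m + 1) _
    rw [hL, (show coeff (m + 1) ψ.derivativeFun = _ from coeff_derivative (R := F) ψ (m + 1)), hψ, coeff_mk, hdiff]
    push_cast
    ring
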